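/- For every l ≥ 2, the graph Δ on vertex set [l] with edge set {{1,j} : j = 2,...,l} ∪ {{j,j+1} : j = 2,...,l−1} belongs to V_2(l) and has exactly 2l − 3 edges; hence the bound |F(Δ)| ≤ 2l − 3 for graphs in V_2(l) is attained. -/

import Mathlib

/-- The facets of positive dimension of a simplicial complex `Δ ⊆ 2^{[l]}`:
maximal faces with at least two vertices. -/
def facets {l : ℕ} (Δ : Finset (Finset (Fin l))) : Finset (Finset (Fin l)) :=
  Δ.filter (fun F => 2 ≤ F.card ∧ ∀ G ∈ Δ, F ⊆ G → F = G)

/-- Membership in `V₂(l)`: a simplicial complex on `[l]` containing all singletons,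
whose positive-dimensional facets pairwise share at most one vertex, and such that
`2(|I|-1) > Σ_{F ∈ F(Δ|_I)} dim F` for all `I ⊆ [l]` with `|I| > 1`. -/
def memV2 (l : ℕ) (Δ : Finset (Finset (Fin l))) : Prop :=
  (∀ F ∈ Δ, ∀ F' ⊆ F, F' ∈ Δ) ∧ (∀ i : Fin l, ({i} : Finset (Fin l)) ∈ Δ) ∧
  (∀ F ∈ facets Δ, ∀ G ∈ facets Δ, F ≠ G → (F ∩ G).card ≤ 1) ∧
  (∀ I : Finset (Fin l), 1 < I.card →
    ∑ F ∈ facets (Δ.image (· ∩ I)), (F.card - 1) < 2 * (I.card - 1))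

/-- The graph on `[l]` (0-indexed) with edges `{0,j}` for `j = 1,…,l-1` and `{j,j+1}`
for `j = 1,…,l-2`, i.e. the complex consisting of these edges and all singletons. -/
def pathStarGraph (l : ℕ) : Finset (Finset (Fin l)) :=
  Finset.univ.filter (fun F : Finset (Fin l) =>
    F.card ≤ 1 ∨ ∃ i j : Fin l, F = {i, j} ∧
      (((i : ℕ) = 0 ∧ 1 ≤ (j : ℕ)) ∨
        (1 ≤ (i : ℕ) ∧ (j : ℕ) = (i : ℕ) + 1 ∧ (j : ℕ) ≤ l - 1)))

open Finset

def zr {l : ℕ} (hl : 2 ≤ l) : Fin l := ⟨0, by omega⟩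

def fsucc {l : ℕ} (hl : 2 ≤ l) (j : Fin l) : Fin l := ⟨(j.val + 1) % l, Nat.mod_lt _ (by omega)⟩

lemma fsucc_val {l : ℕ} (hl : 2 ≤ l) (j : Fin l) (h : j.val + 1 < l) :
    (fsucc hl j).val = j.val + 1 := Nat.mod_eq_of_lt h

lemma mem_psg {l : ℕ} (F : Finset (Fin l)) : F ∈ pathStarGraph l ↔
    F.card ≤ 1 ∨ ∃ i j : Fin l, F = {i, j} ∧
      (((i : ℕ) = 0 ∧ 1 ≤ (j : ℕ)) ∨
        (1 ≤ (i : ℕ) ∧ (j : ℕ) = (i : ℕ) + 1 ∧ (j : ℕ) ≤ l - 1)) := by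
  simp [pathStarGraph]

lemma psg_card_le_two {l : ℕ} {F : Finset (Fin l)} (h : F ∈ pathStarGraph l) : F.card ≤ 2 := by
  rcases (mem_psg F).1 h with h1 | ⟨i, j, rfl, _⟩
  · omega
  · exact (card_insert_le _ _).trans (by simp)

def edgesA {l : ℕ} (hl : 2 ≤ l) : Finset (Finset (Fin l)) :=
  (univ.filter fun j : Fin l => 1 ≤ j.val).image fun j => {zr hl, j}

def edgesB {l : ℕ} (hl : 2 ≤ l) : Finset (Finset (Fin l)) :=
  (univ.filter fun j : Fin l => 1 ≤ j.val ∧ j.val + 1 ≤ l - 1).image fun j => {j, fsucc hl j}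

lemma edge_decomp {l : ℕ} (hl : 2 ≤ l) :
    (pathStarGraph l).filter (fun F => F.card = 2) = edgesA hl ∪ edgesB hl := by
  ext F
  simp only [mem_filter, mem_psg, edgesA, edgesB, mem_union, mem_image, mem_filter, mem_univ,
    true_and]
  constructor
  · rintro ⟨h1 | ⟨i, j, rfl, hc⟩, h2⟩
    · omega
    rcases hc with ⟨hi0, hj1⟩ | ⟨hi1, hj, hjl⟩
    · left
      exact ⟨j, hj1, by rw [show i = zr hl from Fin.ext hi0]⟩
    · right
      refine ⟨i, ⟨hi1, by omega⟩, ?_⟩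
      have : j = fsucc hl i := Fin.ext (by rw [fsucc_val hl i (by omega)]; omega)
      rw [this]
  · rintro (⟨j, hj1, rfl⟩ | ⟨j, ⟨hj1, hj2⟩, rfl⟩)
    · refine ⟨Or.inr ⟨zr hl, j, rfl, Or.inl ⟨rfl, hj1⟩⟩, ?_⟩
      rw [card_insert_of_notMem (by simp [zr, Fin.ext_iff]; omega), card_singleton]
    · have hv : (fsucc hl j).val = j.val + 1 := fsucc_val hl j (by omega)
      refine ⟨Or.inr ⟨j, fsucc hl j, rfl, Or.inr ⟨hj1, hv, by omega⟩⟩, ?_⟩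
      rw [card_insert_of_notMem (by simp [Fin.ext_iff]; omega), card_singleton]

lemma edgesA_card {l : ℕ} (hl : 2 ≤ l) : (edgesA hl).card = l - 1 := by
  rw [edgesA, card_image_of_injOn, show (univ.filter fun j : Fin l => 1 ≤ j.val)
    = univ.erase (zr hl) by ext j; simp [zr, Fin.ext_iff]; omega,
    card_erase_of_mem (mem_univ _), card_univ, Fintype.card_fin]
  intro a ha b hb hab
  simp only [mem_coe, mem_filter, mem_univ, true_and] at ha hb
  simp only at hab
  have : a ∈ ({zr hl, b} : Finset (Fin l)) := by
    rw [← hab]; exact mem_insert_of_mem (mem_singleton_self a)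
  simp only [mem_insert, mem_singleton] at this
  rcases this with h | h
  · exact absurd (congrArg Fin.val h) (by simp [zr]; omega)
  · exact h

lemma edgesB_card {l : ℕ} (hl : 2 ≤ l) : (edgesB hl).card = l - 2 := by
  have inj : Set.InjOn (fun j => ({j, fsucc hl j} : Finset (Fin l)))
      (univ.filter fun j : Fin l => 1 ≤ j.val ∧ j.val + 1 ≤ l - 1) := by
    intro a ha b hb hab
    simp only [coe_filter, mem_univ, true_and, Set.mem_setOf_eq, mem_coe, mem_filter] at ha hb
    simp only at hab
    have hva : (fsucc hl a).val = a.val + 1 := fsucc_val hl a (by omega)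
    have hvb : (fsucc hl b).val = b.val + 1 := fsucc_val hl b (by omega)
    have h1 : a ∈ ({b, fsucc hl b} : Finset (Fin l)) := by
      rw [← hab]; exact mem_insert_self _ _
    have h2 : b ∈ ({a, fsucc hl a} : Finset (Fin l)) := by
      rw [hab]; exact mem_insert_self _ _
    simp only [mem_insert, mem_singleton] at h1 h2
    apply Fin.ext
    rcases h1 with h1 | h1 <;> rcases h2 with h2 | h2 <;>
      first
      | (exact congrArg Fin.val h1)
      | (exact (congrArg Fin.val h2).symm)
      | (have e1 := congrArg Fin.val h1; have e2 := congrArg Fin.val h2;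
         rw [hvb] at e1; rw [hva] at e2; omega)
  rw [edgesB, card_image_of_injOn inj]
  have : (univ.filter fun j : Fin l => 1 ≤ j.val ∧ j.val + 1 ≤ l - 1).card
      = (Finset.Ico 1 (l-1)).card := by
    apply card_bij (fun j _ => j.val)
    · intro a ha; simp only [mem_filter, mem_univ, true_and] at ha
      rw [mem_Ico]; omega
    · intro a _ b _ h; exact Fin.ext h
    · intro b hb
      rw [mem_Ico] at hb
      exact ⟨⟨b, by omega⟩, by simp; omega, rfl⟩
  rw [this, Nat.card_Ico]; omega

lemma edges_disjoint {l : ℕ} (hl : 2 ≤ l) : Disjoint (edgesA hl) (edgesB hl) := by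
  rw [disjoint_left]
  rintro F hA hB
  simp only [edgesA, edgesB, mem_image, mem_filter, mem_univ, true_and] at hA hB
  obtain ⟨j, hj, rfl⟩ := hA
  obtain ⟨i, ⟨hi1, hi2⟩, heq⟩ := hB
  have : zr hl ∈ ({i, fsucc hl i} : Finset (Fin l)) := heq ▸ mem_insert_self _ _
  have hv : (fsucc hl i).val = i.val + 1 := fsucc_val hl i (by omega)
  simp only [mem_insert, mem_singleton] at this
  rcases this with h | h <;> · have := congrArg Fin.val h; simp [zr] at this; omega

lemma edge_count {l : ℕ} (hl : 2 ≤ l) :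
    ((pathStarGraph l).filter (fun F => F.card = 2)).card = 2 * l - 3 := by
  rw [edge_decomp hl, card_union_of_disjoint (edges_disjoint hl), edgesA_card, edgesB_card]
  omega

lemma fsucc_pair_injOn {l : ℕ} (hl : 2 ≤ l) (s : Finset (Fin l))
    (hs : ∀ j ∈ s, 1 ≤ j.val ∧ j.val + 1 ≤ l - 1) :
    Set.InjOn (fun j => ({j, fsucc hl j} : Finset (Fin l))) s := by
  intro a ha b hb hab
  rw [mem_coe] at ha hb
  obtain ⟨ha1, ha2⟩ := hs a ha
  obtain ⟨hb1, hb2⟩ := hs b hb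
  simp only at hab
  have hva : (fsucc hl a).val = a.val + 1 := fsucc_val hl a (by omega)
  have hvb : (fsucc hl b).val = b.val + 1 := fsucc_val hl b (by omega)
  have h1 : a ∈ ({b, fsucc hl b} : Finset (Fin l)) := by
    rw [← hab]; exact mem_insert_self _ _
  have h2 : b ∈ ({a, fsucc hl a} : Finset (Fin l)) := by
    rw [hab]; exact mem_insert_self _ _
  simp only [mem_insert, mem_singleton] at h1 h2
  apply Fin.ext
  rcases h1 with h1 | h1 <;> rcases h2 with h2 | h2 <;>
    first
    | (exact congrArg Fin.val h1)
    | (exact (congrArg Fin.val h2).symm)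
    | (have e1 := congrArg Fin.val h1; have e2 := congrArg Fin.val h2;
       rw [hvb] at e1; rw [hva] at e2; omega)

lemma facets_image {l : ℕ} (hl : 2 ≤ l) (I : Finset (Fin l)) :
    facets ((pathStarGraph l).image (· ∩ I)) =
      ((pathStarGraph l).filter (fun F => F.card = 2)).filter (· ⊆ I) := by
  ext F
  simp only [facets, mem_filter, mem_image]
  constructor
  · rintro ⟨⟨G, hG, rfl⟩, h2, _⟩
    have hcG := psg_card_le_two hG
    have hle : (G ∩ I).card ≤ G.card := card_le_card inter_subset_left
    have heq : G ∩ I = G := eq_of_subset_of_card_le inter_subset_left (by omega)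
    rw [heq]
    exact ⟨⟨hG, by omega⟩, inter_eq_left.mp heq⟩
  · rintro ⟨⟨hF, h2⟩, hI⟩
    refine ⟨⟨F, hF, inter_eq_left.2 hI⟩, by omega, ?_⟩
    rintro G ⟨H, hH, rfl⟩ hsub
    have : (H ∩ I).card ≤ H.card := card_le_card inter_subset_left
    have hcH := psg_card_le_two hH
    exact eq_of_subset_of_card_le hsub (by omega)

lemma cardA_le {l : ℕ} (hl : 2 ≤ l) (I : Finset (Fin l)) :
    ((edgesA hl).filter (· ⊆ I)).card ≤ (I.erase (zr hl)).card := by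
  rw [edgesA, Finset.filter_image]
  refine card_image_le.trans (card_le_card ?_)
  intro j hj
  simp only [mem_filter, mem_univ, true_and] at hj
  obtain ⟨hj1, hj2⟩ := hj
  rw [mem_erase]
  refine ⟨by simp [zr, Fin.ext_iff]; omega, hj2 (mem_insert_of_mem (mem_singleton_self j))⟩

lemma cardA_zero {l : ℕ} (hl : 2 ≤ l) (I : Finset (Fin l)) (h : zr hl ∉ I) :
    ((edgesA hl).filter (· ⊆ I)) = ∅ := by
  rw [filter_eq_empty_iff]
  intro F hF
  simp only [edgesA, mem_image, mem_filter, mem_univ, true_and] at hF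
  obtain ⟨j, _, rfl⟩ := hF
  intro hsub
  exact h (hsub (mem_insert_self _ _))

lemma cardB_le {l : ℕ} (hl : 2 ≤ l) (I : Finset (Fin l)) :
    ((edgesB hl).filter (· ⊆ I)) = ∅ ∨
      ((edgesB hl).filter (· ⊆ I)).card + 1 ≤ (I.erase (zr hl)).card := by
  rw [edgesB, Finset.filter_image]
  set s := (univ.filter fun j : Fin l => (1 ≤ j.val ∧ j.val + 1 ≤ l - 1)).filter
    (fun j => ({j, fsucc hl j} : Finset (Fin l)) ⊆ I) with hs
  have hmem : ∀ j ∈ s, (1 ≤ j.val ∧ j.val + 1 ≤ l - 1) ∧ j ∈ I ∧ fsucc hl j ∈ I := by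
    intro j hj
    simp only [hs, mem_filter, mem_univ, true_and] at hj
    exact ⟨hj.1, hj.2 (mem_insert_self _ _), hj.2 (mem_insert_of_mem (mem_singleton_self _))⟩
  rcases eq_or_ne s ∅ with he | he
  · left; rw [he, image_empty]
  · right
    obtain ⟨j0, hj0⟩ := nonempty_iff_ne_empty.2 he
    set J := I.erase (zr hl) with hJ
    have hjJ : ∀ j ∈ s, j ∈ J := by
      intro j hj
      obtain ⟨⟨h1, _⟩, h2, _⟩ := hmem j hj
      rw [hJ, mem_erase]
      exact ⟨by simp [zr, Fin.ext_iff]; omega, h2⟩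
    have hJne : J.Nonempty := ⟨j0, hjJ j0 hj0⟩
    set M := J.min' hJne with hM
    have hcard : (s.image fun j => ({j, fsucc hl j} : Finset (Fin l))).card = s.card :=
      card_image_of_injOn (fsucc_pair_injOn hl s (fun j hj => (hmem j hj).1))
    rw [hcard]
    have hinj : s.card ≤ (J.erase M).card := by
      apply card_le_card_of_injOn (fun j => fsucc hl j)
      · intro j hj
        obtain ⟨⟨h1, h2⟩, _, h3⟩ := hmem j hj
        have hv : (fsucc hl j).val = j.val + 1 := fsucc_val hl j (by omega)
        show fsucc hl j ∈ (↑(J.erase M) : Set (Fin l))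
        rw [mem_coe, mem_erase]
        refine ⟨?_, ?_⟩
        · intro hEq
          have hle : M ≤ j := min'_le J j (hjJ j hj)
          rw [← hEq, Fin.le_def, hv] at hle
          omega
        · rw [hJ, mem_erase]
          exact ⟨by simp [zr, Fin.ext_iff]; omega, h3⟩
      · intro a ha b hb hab
        obtain ⟨⟨ha1, ha2⟩, _, _⟩ := hmem a ha
        obtain ⟨⟨hb1, hb2⟩, _, _⟩ := hmem b hb
        have hva : (fsucc hl a).val = a.val + 1 := fsucc_val hl a (by omega)
        have hvb : (fsucc hl b).val = b.val + 1 := fsucc_val hl b (by omega)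
        simp only at hab
        have h := congrArg Fin.val hab
        rw [hva, hvb] at h
        exact Fin.ext (by omega)
    have hM' : M ∈ J := min'_mem J hJne
    rw [card_erase_of_mem hM'] at hinj
    have : 1 ≤ J.card := card_pos.2 hJne
    omega


/-- For `l ≥ 2`, the graph with edges `{1,j}` (`j = 2,…,l`) and `{j,j+1}`
(`j = 2,…,l-1`) belongs to `V₂(l)` and has exactly `2l - 3` edges, so the bound
`|F(Δ)| ≤ 2l - 3` for graphs in `V₂(l)` is attained. -/
theorem stmt9 (l : ℕ) (hl : 2 ≤ l) :
    memV2 l (pathStarGraph l) ∧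
    ((pathStarGraph l).filter (fun F => F.card = 2)).card = 2 * l - 3 := by
  refine ⟨⟨?_, ?_, ?_, ?_⟩, edge_count hl⟩
  · -- downward closed
    intro F hF F' hsub
    by_cases h : F'.card ≤ 1
    · exact (mem_psg F').2 (Or.inl h)
    · have h2 : 2 ≤ F'.card := by omega
      have hF2 := psg_card_le_two hF
      have hle := card_le_card hsub
      have : F' = F := eq_of_subset_of_card_le hsub (by omega)
      rw [this]; exact hF
  · -- singletons
    intro i
    exact (mem_psg _).2 (Or.inl (by simp))
  · -- facets pairwise intersect in ≤ 1 vertex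
    intro F hF G hG hne
    simp only [facets, mem_filter] at hF hG
    obtain ⟨hF1, _, hFmax⟩ := hF
    obtain ⟨hG1, _, _⟩ := hG
    by_contra h
    push_neg at h
    have hcF := psg_card_le_two hF1
    have : F ∩ G = F := eq_of_subset_of_card_le inter_subset_left (by omega)
    exact hne (hFmax G hG1 (inter_eq_left.mp this))
  · -- the sum condition
    intro I hI
    rw [facets_image hl I]
    have hone : ∀ F ∈ ((pathStarGraph l).filter fun F => F.card = 2).filter (· ⊆ I),
        F.card - 1 = 1 := by
      intro F hF
      simp only [mem_filter] at hF
      omega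
    rw [Finset.sum_congr rfl hone, Finset.sum_const, smul_eq_mul, mul_one]
    rw [edge_decomp hl, filter_union]
    have hU := card_union_le ((edgesA hl).filter (· ⊆ I)) ((edgesB hl).filter (· ⊆ I))
    have hA := cardA_le hl I
    have hB := cardB_le hl I
    have hBe : ((edgesB hl).filter (· ⊆ I)) = ∅ → ((edgesB hl).filter (· ⊆ I)).card = 0 := by
      intro h; rw [h, card_empty]
    by_cases hz : zr hl ∈ I
    · have hle : (I.erase (zr hl)).card = I.card - 1 := card_erase_of_mem hz
      rcases hB with hB | hB
      · have := hBe hB; omega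
      · omega
    · have h0 : ((edgesA hl).filter (· ⊆ I)) = ∅ := cardA_zero hl I hz
      have h0' : ((edgesA hl).filter (· ⊆ I)).card = 0 := by rw [h0, card_empty]
      have hle : (I.erase (zr hl)).card = I.card := by rw [erase_eq_of_notMem hz]
      rcases hB with hB | hB
      · have := hBe hB; omega
      · omega
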